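/- Let V be a finite-dimensional vector space over a field with a nondegenerate symmetric bilinear form B, and let V = H ⊕ M be a direct sum decomposition with H and M orthogonal with respect to B. Suppose T : V → V is a linear map which is skew-adjoint for B (B(Tx,y) = -B(x,Ty) for all x,y) and exchanges the summands: T(H) ⊆ M and T(M) ⊆ H. Then dim(ker T ∩ H) = ½·(dim(ker T) + dim H − dim M). -/

import Mathlib

open LinearMap.BilinForm in
/-- Kostant–Rallis dimension formula: for a skew-adjoint operator exchanging
the two summands of an orthogonal direct sum decomposition,
dim(ker T ∩ H) = ½(dim ker T + dim H − dim M). -/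
theorem stmt_13 {k V : Type*} [Field k] [AddCommGroup V] [Module k V]
    [FiniteDimensional k V]
    (htwo : (2 : k) ≠ 0)
    (B : V →ₗ[k] V →ₗ[k] k)
    (hsymm : ∀ x y, B x y = B y x)
    (hnd : ∀ x, (∀ y, B x y = 0) → x = 0)
    (H M : Submodule k V) (hcompl : IsCompl H M)
    (horth : ∀ h ∈ H, ∀ m ∈ M, B h m = 0)
    (T : V →ₗ[k] V)
    (hskew : ∀ x y, B (T x) y = - B x (T y))
    (hTH : ∀ h ∈ H, T h ∈ M) (hTM : ∀ m ∈ M, T m ∈ H) :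
    2 * (Module.finrank k ↥(LinearMap.ker T ⊓ H) : ℤ)
      = (Module.finrank k ↥(LinearMap.ker T) : ℤ)
        + (Module.finrank k ↥H : ℤ) - (Module.finrank k ↥M : ℤ) := by
  classical
  set K := LinearMap.ker T with hK
  have hrefl : LinearMap.BilinForm.IsRefl B := fun x y h => by rw [hsymm]; exact h
  have hBnd : LinearMap.BilinForm.Nondegenerate B :=
    ⟨fun x hx => hnd x hx, fun y hy => hnd y (fun x => by rw [hsymm]; exact hy x)⟩
  have hHM : H ⊓ M = ⊥ := hcompl.disjoint.eq_bot
  -- Step 1: K = (K ⊓ H) ⊔ (K ⊓ M)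
  have hKsplit : K = (K ⊓ H) ⊔ (K ⊓ M) := by
    apply le_antisymm
    · intro x hx
      obtain ⟨h, m, hh, hm, rfl⟩ :=
        Submodule.codisjoint_iff_exists_add_eq.mp hcompl.codisjoint x
      have hx0 : T h + T m = 0 := by rw [← map_add]; exact hx
      have hTh0 : T h = 0 := by
        have hmem : T h ∈ H ⊓ M := by
          refine ⟨?_, hTH h hh⟩
          rw [eq_neg_of_add_eq_zero_left hx0]
          exact neg_mem (hTM m hm)
        rw [hHM] at hmem; simpa using hmem
      have hTm0 : T m = 0 := by
        have := hx0; rw [hTh0, zero_add] at this; exact this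
      exact Submodule.add_mem_sup ⟨hTh0, hh⟩ ⟨hTm0, hm⟩
    · exact sup_le inf_le_left inf_le_left
  have hdim1 : Module.finrank k K
      = Module.finrank k ↥(K ⊓ H) + Module.finrank k ↥(K ⊓ M) := by
    have hinf : (K ⊓ H) ⊓ (K ⊓ M) = ⊥ := by
      rw [eq_bot_iff, ← hHM]
      exact le_inf (inf_le_of_left_le inf_le_right)
        (inf_le_of_right_le inf_le_right)
    have h2 := Submodule.finrank_sup_add_finrank_inf_eq (K ⊓ H) (K ⊓ M)
    rw [hinf, finrank_bot, add_zero] at h2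
    conv_lhs => rw [hKsplit]
    exact h2
  -- Step 2: rank-nullity for T restricted to H
  have hdim2 : Module.finrank k ↥(Submodule.map T H) + Module.finrank k ↥(K ⊓ H)
      = Module.finrank k H := by
    have hker : LinearMap.ker (T.domRestrict H) = (K ⊓ H).comap H.subtype := by
      ext ⟨x, hx⟩
      simp [LinearMap.mem_ker, hK, hx]
    have e1 : Module.finrank k ↥(LinearMap.ker (T.domRestrict H))
        = Module.finrank k ↥(K ⊓ H) := by
      rw [hker]
      exact (Submodule.comapSubtypeEquivOfLe inf_le_right).finrank_eq
    have h2 := LinearMap.finrank_range_add_finrank_ker (T.domRestrict H)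
    rw [LinearMap.range_domRestrict, e1] at h2
    exact h2
  -- Step 3: orthogonal of map T H is H ⊔ (K ⊓ M)
  have horthog : LinearMap.BilinForm.orthogonal B (Submodule.map T H)
      = H ⊔ (K ⊓ M) := by
    apply le_antisymm
    · intro v hv
      obtain ⟨h, m, hh, hm, rfl⟩ :=
        Submodule.codisjoint_iff_exists_add_eq.mp hcompl.codisjoint v
      have hTm0 : T m = 0 := by
        apply hnd
        intro y
        obtain ⟨h', m', hh', hm', rfl⟩ :=
          Submodule.codisjoint_iff_exists_add_eq.mp hcompl.codisjoint y
        have h1 : B (T m) h' = 0 := by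
          rw [hsymm]
          have hTv : B (T h') (h + m) = 0 := hv (T h') ⟨h', hh', rfl⟩
          have h2 : B (T h') (h + m) = - (B h' (T h) + B h' (T m)) := by
            rw [hskew, map_add, map_add]
          rw [hTv] at h2
          have hz : B h' (T h) = 0 := horth h' hh' (T h) (hTH h hh)
          have h3 : B h' (T h) + B h' (T m) = 0 := by
            rw [← neg_eq_zero, h2]
          rw [hz, zero_add] at h3
          exact h3
        have h2 : B (T m) m' = 0 := horth (T m) (hTM m hm) m' hm'
        rw [map_add, h1, h2, add_zero]
      exact Submodule.add_mem_sup hh ⟨hTm0, hm⟩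
    · refine sup_le (fun h hh => ?_) (fun m hm => ?_)
      · rintro _ ⟨h', hh', rfl⟩
        show B (T h') h = 0
        rw [hsymm]
        exact horth h hh (T h') (hTH h' hh')
      · rintro _ ⟨h', hh', rfl⟩
        show B (T h') m = 0
        rw [hskew, hm.1, map_zero, neg_zero]
  -- Step 4: finrank of H ⊔ (K ⊓ M)
  have hdim4 : Module.finrank k ↥(H ⊔ (K ⊓ M))
      = Module.finrank k H + Module.finrank k ↥(K ⊓ M) := by
    have hinf : H ⊓ (K ⊓ M) = ⊥ := by
      rw [eq_bot_iff, ← hHM]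
      exact le_inf inf_le_left (inf_le_of_right_le inf_le_right)
    have h2 := Submodule.finrank_sup_add_finrank_inf_eq H (K ⊓ M)
    rw [hinf, finrank_bot, add_zero] at h2
    exact h2
  -- Step 5: nondegeneracy dimension formula
  have hdim5 : Module.finrank k ↥(Submodule.map T H)
        + Module.finrank k ↥(LinearMap.BilinForm.orthogonal B (Submodule.map T H))
      = Module.finrank k V := by
    have h2 := LinearMap.BilinForm.finrank_add_finrank_orthogonal
      (B := B) hrefl (Submodule.map T H)
    rw [LinearMap.BilinForm.orthogonal_top_eq_bot hBnd, inf_bot_eq,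
      finrank_bot, add_zero] at h2
    exact h2
  rw [horthog, hdim4] at hdim5
  -- Step 6: finrank V = finrank H + finrank M
  have hdim6 : Module.finrank k H + Module.finrank k M = Module.finrank k V :=
    Submodule.finrank_add_eq_of_isCompl hcompl
  omega
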